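/- If M is sufficient and the affine subspace S = {q + Qθ : θ ∈ ℝ^d} lies in general position (i.e., for every complementary basis B, S ∩ 𝒞(B) ≠ ∅ implies S ∩ int 𝒞(B) ≠ ∅), then for any two distinct complementary bases B₁, B₂ the relative interiors of the critical domains S_{B₁} = 𝒞(B₁) ∩ S and S_{B₂} = 𝒞(B₂) ∩ S are disjoint. -/

import Mathlib

open Matrix

/-- `M` is column sufficient. -/
def ColSuff {n : ℕ} (M : Matrix (Fin n) (Fin n) ℝ) : Prop :=
  ∀ z : Fin n → ℝ, (∀ i, z i * M.mulVec z i ≤ 0) → ∀ i, z i * M.mulVec z i = 0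

/-- `M` is sufficient: both `M` and `Mᵀ` are column sufficient. -/
def Suff {n : ℕ} (M : Matrix (Fin n) (Fin n) ℝ) : Prop := ColSuff M ∧ ColSuff Mᵀ

/-- The matrix `A = [I, -M]`, with columns indexed by `Fin n ⊕ Fin n`. -/
def Amat {n : ℕ} (M : Matrix (Fin n) (Fin n) ℝ) : Matrix (Fin n) (Fin n ⊕ Fin n) ℝ :=
  Matrix.fromCols 1 (-M)

/-- The complementary index. -/
def bar {n : ℕ} : Fin n ⊕ Fin n → Fin n ⊕ Fin n
  | .inl i => .inr i
  | .inr i => .inl i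

/-- `B` is a basis of `A = [I, -M]`: `n` linearly independent columns. -/
def IsBasis {n : ℕ} (M : Matrix (Fin n) (Fin n) ℝ) (B : Finset (Fin n ⊕ Fin n)) : Prop :=
  B.card = n ∧ LinearIndependent ℝ (fun j : B => (Amat M)ᵀ (j : Fin n ⊕ Fin n))

/-- A complementary basis: a basis containing exactly one of each complementary pair. -/
def IsComplBasis {n : ℕ} (M : Matrix (Fin n) (Fin n) ℝ) (B : Finset (Fin n ⊕ Fin n)) : Prop :=
  IsBasis M B ∧ ∀ i : Fin n, Xor' (Sum.inl i ∈ B) (Sum.inr i ∈ B)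

/-- The complementary cone `𝒞(J)`: nonnegative combinations of the columns of `A` indexed by `J`. -/
def coneOf {n : ℕ} (M : Matrix (Fin n) (Fin n) ℝ) (J : Finset (Fin n ⊕ Fin n)) :
    Set (Fin n → ℝ) :=
  {y | ∃ c : Fin n ⊕ Fin n → ℝ, (∀ j, 0 ≤ c j) ∧ (∀ j ∉ J, c j = 0) ∧ y = (Amat M).mulVec c}

/- ---------- auxiliary lemmas ---------- -/

lemma mulVec_eq_sum' {n m : Type*} [Fintype m] (A : Matrix n m ℝ) (d : m → ℝ) :
    A.mulVec d = ∑ j, d j • Aᵀ j := by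
  funext i
  simp [Matrix.mulVec, dotProduct, Finset.sum_apply, mul_comm]

lemma rep_unique {n : ℕ} (M : Matrix (Fin n) (Fin n) ℝ) (B : Finset (Fin n ⊕ Fin n))
    (hli : LinearIndependent ℝ (fun j : B => (Amat M)ᵀ (j : Fin n ⊕ Fin n)))
    (u v : Fin n ⊕ Fin n → ℝ) (hu : ∀ j ∉ B, u j = 0) (hv : ∀ j ∉ B, v j = 0)
    (h : (Amat M).mulVec u = (Amat M).mulVec v) : u = v := by
  have key : ∀ j : B, (u - v) (j : Fin n ⊕ Fin n) = 0 := by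
    rw [Fintype.linearIndependent_iff] at hli
    apply hli
    have h1 : ∑ j : B, (u - v) (j : Fin n ⊕ Fin n) • (Amat M)ᵀ (j : Fin n ⊕ Fin n)
        = ∑ j : Fin n ⊕ Fin n, (u - v) j • (Amat M)ᵀ j := by
      rw [Finset.sum_coe_sort B (fun j => (u - v) j • (Amat M)ᵀ j)]
      apply Finset.sum_subset (Finset.subset_univ _)
      intro j _ hj
      have h0 : (u - v) j = 0 := by simp [Pi.sub_apply, hu j hj, hv j hj]
      simp [h0]
    rw [h1, ← mulVec_eq_sum']
    have h2 : (Amat M).mulVec (u - v) = (Amat M).mulVec u - (Amat M).mulVec v := by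
      simp [Matrix.mulVec_sub]
    rw [h2, h, sub_self]
  funext j
  by_cases hj : j ∈ B
  · simpa [sub_eq_zero] using key ⟨j, hj⟩
  · rw [hu j hj, hv j hj]

lemma convex_coneOf {n : ℕ} (M : Matrix (Fin n) (Fin n) ℝ) (J : Finset (Fin n ⊕ Fin n)) :
    Convex ℝ (coneOf M J) := by
  rintro y₁ ⟨c₁, hc₁0, hc₁s, rfl⟩ y₂ ⟨c₂, hc₂0, hc₂s, rfl⟩ a b ha hb hab
  refine ⟨a • c₁ + b • c₂, fun j => by simp only [Pi.add_apply, Pi.smul_apply, smul_eq_mul]; exact add_nonneg (mul_nonneg ha (hc₁0 j)) (mul_nonneg hb (hc₂0 j)), fun j hj => by simp [hc₁s j hj, hc₂s j hj], ?_⟩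
  simp [Matrix.mulVec_add, Matrix.mulVec_smul]

/-- In the interior of a complementary cone, the (unique) representing coefficients
are strictly positive on `B`. -/
lemma interior_coeffs {n : ℕ} (M : Matrix (Fin n) (Fin n) ℝ) (B : Finset (Fin n ⊕ Fin n))
    (hB : IsComplBasis M B) {y : Fin n → ℝ} (hy : y ∈ interior (coneOf M B)) :
    ∃ c : Fin n ⊕ Fin n → ℝ, (∀ j, 0 ≤ c j) ∧ (∀ j ∉ B, c j = 0) ∧
      y = (Amat M).mulVec c ∧ ∀ j ∈ B, 0 < c j := by
  obtain ⟨c, hc0, hcs, hyc⟩ := interior_subset hy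
  refine ⟨c, hc0, hcs, hyc, ?_⟩
  intro j hj
  obtain ⟨ε, hε, hball⟩ := Metric.mem_nhds_iff.1 (mem_interior_iff_mem_nhds.1 hy)
  have hAj : (Amat M)ᵀ j ≠ 0 := hB.1.2.ne_zero ⟨j, hj⟩
  have hAjn : 0 < ‖(Amat M)ᵀ j‖ := norm_pos_iff.2 hAj
  set t : ℝ := ε / (2 * ‖(Amat M)ᵀ j‖) with ht
  have htpos : 0 < t := by positivity
  have hy' : y - t • (Amat M)ᵀ j ∈ coneOf M B := by
    apply hball
    rw [Metric.mem_ball, dist_eq_norm]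
    have : y - t • (Amat M)ᵀ j - y = -(t • (Amat M)ᵀ j) := by abel
    rw [this, norm_neg, norm_smul, Real.norm_of_nonneg htpos.le]
    rw [ht, div_mul_eq_mul_div, mul_comm]
    calc ‖(Amat M)ᵀ j‖ * ε / (2 * ‖(Amat M)ᵀ j‖) = ε / 2 := by
          field_simp
      _ < ε := by linarith
  obtain ⟨c', hc'0, hc's, hyc'⟩ := hy'
  have hrep : (Amat M).mulVec (c - (Pi.single j t : Fin n ⊕ Fin n → ℝ)) = (Amat M).mulVec c' := by
    rw [Matrix.mulVec_sub, ← hyc, ← hyc', Matrix.mulVec_single]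
    funext i
    simp [Matrix.transpose_apply, mul_comm]
  have hsupp : ∀ k ∉ B, (c - (Pi.single j t : Fin n ⊕ Fin n → ℝ)) k = 0 := by
    intro k hk
    have : k ≠ j := fun h => hk (h ▸ hj)
    simp [Pi.sub_apply, hcs k hk, Pi.single_eq_of_ne this]
  have := rep_unique M B hB.1.2 _ _ hsupp hc's hrep
  have hcj : c j - t = c' j := by
    have := congrFun this j
    simpa [Pi.sub_apply] using this
  have := hc'0 j
  linarith [hc'0 j, hcj ▸ hc'0 j]

/-- Sufficiency implies distinct complementary cones have disjoint interiors. -/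
lemma interiors_disjoint {n : ℕ} (M : Matrix (Fin n) (Fin n) ℝ) (hM : Suff M)
    (B₁ B₂ : Finset (Fin n ⊕ Fin n)) (hB₁ : IsComplBasis M B₁) (hB₂ : IsComplBasis M B₂)
    {y : Fin n → ℝ} (h₁ : y ∈ interior (coneOf M B₁)) (h₂ : y ∈ interior (coneOf M B₂)) :
    B₁ = B₂ := by
  obtain ⟨c₁, hc₁0, hc₁s, hyc₁, hc₁pos⟩ := interior_coeffs M B₁ hB₁ h₁
  obtain ⟨c₂, hc₂0, hc₂s, hyc₂, hc₂pos⟩ := interior_coeffs M B₂ hB₂ h₂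
  set w₁ : Fin n → ℝ := fun i => c₁ (Sum.inl i)
  set x₁ : Fin n → ℝ := fun i => c₁ (Sum.inr i)
  set w₂ : Fin n → ℝ := fun i => c₂ (Sum.inl i)
  set x₂ : Fin n → ℝ := fun i => c₂ (Sum.inr i)
  have hy₁ : y = w₁ - M.mulVec x₁ := by
    have : c₁ = Sum.elim w₁ x₁ := by funext j; cases j <;> rfl
    rw [hyc₁, this, Amat, Matrix.fromCols_mulVec_sumElim]
    simp [sub_eq_add_neg, Matrix.neg_mulVec]
  have hy₂ : y = w₂ - M.mulVec x₂ := by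
    have : c₂ = Sum.elim w₂ x₂ := by funext j; cases j <;> rfl
    rw [hyc₂, this, Amat, Matrix.fromCols_mulVec_sumElim]
    simp [sub_eq_add_neg, Matrix.neg_mulVec]
  -- dichotomy for each index
  have dich : ∀ (B : Finset (Fin n ⊕ Fin n)) (c : Fin n → ℝ) (x : Fin n → ℝ)
      (hB : IsComplBasis M B), True := fun _ _ _ _ => trivial
  have key₁ : ∀ i, (Sum.inl i ∈ B₁ ∧ x₁ i = 0 ∧ 0 < w₁ i) ∨
      (Sum.inr i ∈ B₁ ∧ w₁ i = 0 ∧ 0 < x₁ i) := by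
    intro i
    rcases hB₁.2 i with ⟨hl, hnr⟩ | ⟨hr, hnl⟩
    · exact Or.inl ⟨hl, hc₁s _ hnr, hc₁pos _ hl⟩
    · exact Or.inr ⟨hr, hc₁s _ hnl, hc₁pos _ hr⟩
  have key₂ : ∀ i, (Sum.inl i ∈ B₂ ∧ x₂ i = 0 ∧ 0 < w₂ i) ∨
      (Sum.inr i ∈ B₂ ∧ w₂ i = 0 ∧ 0 < x₂ i) := by
    intro i
    rcases hB₂.2 i with ⟨hl, hnr⟩ | ⟨hr, hnl⟩
    · exact Or.inl ⟨hl, hc₂s _ hnr, hc₂pos _ hl⟩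
    · exact Or.inr ⟨hr, hc₂s _ hnl, hc₂pos _ hr⟩
  -- the sufficiency argument
  set z : Fin n → ℝ := x₁ - x₂ with hz
  have hMz : M.mulVec z = w₁ - w₂ := by
    rw [hz, Matrix.mulVec_sub]
    have e1 : M.mulVec x₁ = w₁ - y := by rw [hy₁]; abel
    have e2 : M.mulVec x₂ = w₂ - y := by rw [hy₂]; abel
    rw [e1, e2]; abel
  have hcomp₁ : ∀ i, x₁ i * w₁ i = 0 := by
    intro i; rcases key₁ i with ⟨_, h0, _⟩ | ⟨_, h0, _⟩ <;> simp [h0]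
  have hcomp₂ : ∀ i, x₂ i * w₂ i = 0 := by
    intro i; rcases key₂ i with ⟨_, h0, _⟩ | ⟨_, h0, _⟩ <;> simp [h0]
  have hprod : ∀ i, z i * M.mulVec z i = -(x₁ i * w₂ i + x₂ i * w₁ i) := by
    intro i
    rw [congrFun hMz i]
    simp only [hz, Pi.sub_apply]
    have expand : (x₁ i - x₂ i) * (w₁ i - w₂ i)
        = x₁ i * w₁ i + x₂ i * w₂ i - (x₁ i * w₂ i + x₂ i * w₁ i) := by ring
    rw [expand, hcomp₁ i, hcomp₂ i]; ring
  have hzero : ∀ i, x₁ i * w₂ i = 0 ∧ x₂ i * w₁ i = 0 := by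
    have hle : ∀ i, z i * M.mulVec z i ≤ 0 := by
      intro i
      rw [hprod i]
      have n1 : 0 ≤ x₁ i * w₂ i := mul_nonneg (hc₁0 _) (hc₂0 _)
      have n2 : 0 ≤ x₂ i * w₁ i := mul_nonneg (hc₂0 _) (hc₁0 _)
      linarith
    intro i
    have heq := hM.1 z hle i
    rw [hprod i] at heq
    have n1 : 0 ≤ x₁ i * w₂ i := mul_nonneg (hc₁0 _) (hc₂0 _)
    have n2 : 0 ≤ x₂ i * w₁ i := mul_nonneg (hc₂0 _) (hc₁0 _)
    constructor <;> linarith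
  -- conclude B₁ = B₂
  have main : ∀ i : Fin n, (Sum.inl i ∈ B₁ ↔ Sum.inl i ∈ B₂) := by
    intro i
    constructor
    · intro h
      rcases key₁ i with ⟨_, hx₁, hw₁⟩ | ⟨hr, _, _⟩
      · rcases key₂ i with ⟨h', _, _⟩ | ⟨_, _, hx₂⟩
        · exact h'
        · exfalso; have := (hzero i).2; nlinarith
      · exfalso
        rcases hB₁.2 i with ⟨_, hnr⟩ | ⟨_, hnl⟩
        · exact hnr hr
        · exact hnl h
    · intro h
      rcases key₂ i with ⟨_, hx₂, hw₂⟩ | ⟨hr, _, _⟩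
      · rcases key₁ i with ⟨h', _, _⟩ | ⟨_, _, hx₁⟩
        · exact h'
        · exfalso; have := (hzero i).1; nlinarith
      · exfalso
        rcases hB₂.2 i with ⟨_, hnr⟩ | ⟨_, hnl⟩
        · exact hnr hr
        · exact hnl h
  ext j
  cases j with
  | inl i => exact main i
  | inr i =>
    constructor
    · intro h
      rcases hB₂.2 i with ⟨hl, hnr⟩ | ⟨hr, _⟩
      · exfalso
        rcases hB₁.2 i with ⟨_, hnr₁⟩ | ⟨_, hnl₁⟩
        · exact hnr₁ h
        · exact hnl₁ ((main i).2 hl)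
      · exact hr
    · intro h
      rcases hB₁.2 i with ⟨hl, hnr⟩ | ⟨hr, _⟩
      · exfalso
        rcases hB₂.2 i with ⟨_, hnr₂⟩ | ⟨_, hnl₂⟩
        · exact hnr₂ h
        · exact hnl₂ ((main i).1 hl)
      · exact hr

/-- A point of the intrinsic interior of `C ∩ S` lies in `interior C` provided
`C` is convex and `C ∩ S` meets `interior C`. -/
lemma intrinsicInterior_subset_interior {n : ℕ} (C S : Set (Fin n → ℝ))
    (hC : Convex ℝ C) {y : Fin n → ℝ} (hy : y ∈ S ∩ interior C) :
    intrinsicInterior ℝ (C ∩ S) ⊆ interior C := by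
  intro x hx
  obtain ⟨x', hx'int, hx'eq⟩ := hx
  have hxK : x ∈ C ∩ S := intrinsicInterior_subset ⟨x', hx'int, hx'eq⟩
  have hyK : y ∈ C ∩ S := ⟨interior_subset hy.2, hy.1⟩
  by_cases hxy : x = y
  · rw [hxy]; exact hy.2
  obtain ⟨ε, hε, hball⟩ := Metric.mem_nhds_iff.1 (mem_interior_iff_mem_nhds.1 hx'int)
  have hnorm : 0 < ‖x - y‖ := by
    rw [norm_pos_iff, sub_ne_zero]; exact hxy
  set t : ℝ := ε / (2 * ‖x - y‖) with ht
  have htpos : 0 < t := by positivity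
  set zz : Fin n → ℝ := x + t • (x - y) with hzz
  have hzspan : zz ∈ affineSpan ℝ (C ∩ S) := by
    have hxs : x ∈ affineSpan ℝ (C ∩ S) := by rw [← hx'eq]; exact x'.2
    have hys : y ∈ affineSpan ℝ (C ∩ S) := subset_affineSpan ℝ _ hyK
    have := AffineSubspace.smul_vsub_vadd_mem (affineSpan ℝ (C ∩ S)) t hxs hys hxs
    simpa [hzz, vsub_eq_sub, vadd_eq_add, add_comm] using this
  have hzK : zz ∈ C ∩ S := by
    have : (⟨zz, hzspan⟩ : affineSpan ℝ (C ∩ S)) ∈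
        ((↑) : affineSpan ℝ (C ∩ S) → (Fin n → ℝ)) ⁻¹' (C ∩ S) := by
      apply hball
      rw [Metric.mem_ball, Subtype.dist_eq, hx'eq, dist_eq_norm]
      have : zz - x = t • (x - y) := by rw [hzz]; abel
      rw [this, norm_smul, Real.norm_of_nonneg htpos.le, ht]
      rw [div_mul_eq_mul_div, mul_comm]
      calc ‖x - y‖ * ε / (2 * ‖x - y‖) = ε / 2 := by field_simp
        _ < ε := by linarith
    exact this
  -- x is a convex combination of y (interior) and zz (in C)
  have hcomb : (t / (1 + t)) • y + (1 / (1 + t)) • zz = x := by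
    rw [hzz]
    have h1t : (1 : ℝ) + t ≠ 0 := by positivity
    funext i
    simp only [Pi.add_apply, Pi.smul_apply, Pi.sub_apply, smul_eq_mul]
    field_simp
    ring
  rw [← hcomb]
  exact hC.combo_interior_self_mem_interior hy.2 hzK.1
    (by positivity) (by positivity) (by field_simp; ring)

theorem stmt_11 {n d : ℕ} (M : Matrix (Fin n) (Fin n) ℝ) (hM : Suff M)
    (Q : Matrix (Fin n) (Fin d) ℝ) (q : Fin n → ℝ) (hQ : Q.rank = d)
    (S : Set (Fin n → ℝ)) (hS : S = {y | ∃ θ : Fin d → ℝ, y = q + Q.mulVec θ})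
    -- general position
    (hgp : ∀ B : Finset (Fin n ⊕ Fin n), IsComplBasis M B →
      (S ∩ coneOf M B).Nonempty → (S ∩ interior (coneOf M B)).Nonempty)
    (B₁ B₂ : Finset (Fin n ⊕ Fin n))
    (hB₁ : IsComplBasis M B₁) (hB₂ : IsComplBasis M B₂) (hne : B₁ ≠ B₂) :
    intrinsicInterior ℝ (coneOf M B₁ ∩ S) ∩ intrinsicInterior ℝ (coneOf M B₂ ∩ S) = ∅ := by
  rw [Set.eq_empty_iff_forall_notMem]
  rintro x ⟨hx₁, hx₂⟩
  have hxK₁ : x ∈ coneOf M B₁ ∩ S := intrinsicInterior_subset hx₁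
  have hxK₂ : x ∈ coneOf M B₂ ∩ S := intrinsicInterior_subset hx₂
  obtain ⟨y₁, hy₁⟩ := hgp B₁ hB₁ ⟨x, hxK₁.2, hxK₁.1⟩
  obtain ⟨y₂, hy₂⟩ := hgp B₂ hB₂ ⟨x, hxK₂.2, hxK₂.1⟩
  have hi₁ : x ∈ interior (coneOf M B₁) :=
    intrinsicInterior_subset_interior _ S (convex_coneOf M B₁) hy₁ hx₁
  have hi₂ : x ∈ interior (coneOf M B₂) :=
    intrinsicInterior_subset_interior _ S (convex_coneOf M B₂) hy₂ hx₂
  exact hne (interiors_disjoint M hM B₁ B₂ hB₁ hB₂ hi₁ hi₂)
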